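/- Let (M^n, g, f, ρ), n ≥ 3, be a compact static perfect fluid space-time with positive scalar curvature R satisfying the dominant energy condition R/2 ≥ |ρ|. Define v = (1 + αf)^{-(n-2)/2} with α^{-1} = max_M (f² + (n(n-1)/R)|∇f|²)^{1/2}, and let ḡ = v^{4/(n-2)}·g be the conformal metric. Then the scalar curvature R_ḡ of ḡ is non-negative. Moreover, R_ḡ = 0 if and only if Δf = -(R/(n-1))·f and f² + (n(n-1)/R)|∇f|² is constant on M. -/

import Mathlib

/-
STATEMENT 8 (Lemma: non-negativity of the scalar curvature of the conformal metric).
Abstract orthonormal-frame model: curvature tensors are matrices in an orthonormal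
frame, scalar curvature and Laplacian are traces.  The conformal factor is
`v = (1 + αf)^{-(n-2)/2}`; `lapv = Δ_g v` is given by the chain rule, and `Rbar`
is the scalar curvature of `ḡ = v^{4/(n-2)}·g`, given by the conformal
transformation law `R_ḡ = v^{-(n+2)/(n-2)}(R·v - 4((n-1)/(n-2))·Δv)`.
-/

noncomputable section
open MeasureTheory

/-- squared norm of a vector expressed in an orthonormal frame -/
def vnormSq {n : ℕ} (v : Fin n → ℝ) : ℝ := ∑ i, (v i) ^ 2

lemma vnormSq_nonneg {n : ℕ} (v : Fin n → ℝ) : 0 ≤ vnormSq v :=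
  Finset.sum_nonneg fun _ _ => sq_nonneg _

set_option maxHeartbeats 2000000 in
/-- **Lemma.** Let `(Mⁿ, g, f, ρ)`, `n ≥ 3`, be a compact static perfect fluid
space-time with positive scalar curvature satisfying the dominant energy condition.
With `v = (1+αf)^{-(n-2)/2}`, `α⁻¹ = max_M (f² + (n(n-1)/R)|∇f|²)^{1/2}` and
`ḡ = v^{4/(n-2)}g`, the scalar curvature `R_ḡ` is non-negative; moreover `R_ḡ = 0`
iff `Δf = -(R/(n-1))f` and `f² + (n(n-1)/R)|∇f|²` is constant on `M`. -/
theorem conformal_scalar_curvature_nonneg_SPFST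
    {n : ℕ} (hn : 3 ≤ n)
    {M : Type} [MetricSpace M] [MeasurableSpace M] [CompactSpace M]
    (boundary : Set M)
    (f ρ scal lapf : M → ℝ)
    (gradf : M → Fin n → ℝ)
    (ric hessf : M → Matrix (Fin n) (Fin n) ℝ)
    (hbne : boundary.Nonempty)
    -- `f⁻¹(0) = ∂M` and `f > 0` in the interior
    (hf0 : ∀ x, f x = 0 ↔ x ∈ boundary)
    (hfpos : ∀ x, x ∉ boundary → 0 < f x)
    -- scalar curvature and Laplacian are the traces of Ricci and Hessian
    (hscal : ∀ x, scal x = (ric x).trace)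
    (hlapdef : ∀ x, lapf x = (hessf x).trace)
    -- the static perfect fluid equations
    (hstatic : ∀ x, f x • (ric x - (scal x / (n : ℝ)) • (1 : Matrix (Fin n) (Fin n) ℝ))
        = hessf x - (lapf x / (n : ℝ)) • (1 : Matrix (Fin n) (Fin n) ℝ))
    (hfluid : ∀ x, lapf x
        = (((n : ℝ) - 2) / (2 * ((n : ℝ) - 1)) * scal x + (n : ℝ) / ((n : ℝ) - 1) * ρ x) * f x)
    -- positive scalar curvature and the dominant energy condition R/2 ≥ |ρ|
    (hscalpos : ∀ x, 0 < scal x)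
    (hdec : ∀ x, |ρ x| ≤ scal x / 2)
    -- α⁻¹ = max_M (f² + (n(n-1)/R)|∇f|²)^{1/2}
    (α : ℝ) (hα0 : 0 < α)
    (hα : IsGreatest
      (Set.range fun x =>
        Real.sqrt ((f x) ^ 2 + ((n : ℝ) * ((n : ℝ) - 1) / scal x) * vnormSq (gradf x))) α⁻¹)
    -- Δ_g v for v = (1+αf)^{-(n-2)/2}, computed by the chain rule
    (lapv : M → ℝ)
    (hlapv : ∀ x, lapv x
        = -(((n : ℝ) - 2) / 2) * α * (1 + α * f x) ^ (-((n : ℝ) / 2)) * lapf x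
          + ((n : ℝ) * ((n : ℝ) - 2) / 4) * α ^ 2
              * (1 + α * f x) ^ (-(((n : ℝ) + 2) / 2)) * vnormSq (gradf x))
    -- R_ḡ, given by the conformal transformation law of the scalar curvature
    (Rbar : M → ℝ)
    (hRbar : ∀ x, Rbar x
        = ((1 + α * f x) ^ (-(((n : ℝ) - 2) / 2))) ^ (-(((n : ℝ) + 2) / ((n : ℝ) - 2)))
            * (scal x * (1 + α * f x) ^ (-(((n : ℝ) - 2) / 2))
                - 4 * ((n : ℝ) - 1) / ((n : ℝ) - 2) * lapv x)) :
    (∀ x, 0 ≤ Rbar x)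
    ∧ ((∀ x, Rbar x = 0)
        ↔ ((∀ x, lapf x = -(scal x / ((n : ℝ) - 1)) * f x)
            ∧ ∃ C : ℝ, ∀ x,
                (f x) ^ 2 + ((n : ℝ) * ((n : ℝ) - 1) / scal x) * vnormSq (gradf x) = C)) := by
  
  have hN3 : (3:ℝ) ≤ (n:ℝ) := by exact_mod_cast hn
  have hN1 : ((n:ℝ) - 1) ≠ 0 := by intro h; nlinarith
  have hN2 : ((n:ℝ) - 2) ≠ 0 := by intro h; nlinarith
  have hn0 : (n:ℝ) ≠ 0 := by intro h; nlinarith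
  have hfnn : ∀ x, 0 ≤ f x := by
    intro x
    by_cases hx : x ∈ boundary
    · exact ((hf0 x).2 hx).ge
    · exact (hfpos x hx).le
  have hu : ∀ x, 0 < 1 + α * f x := by
    intro x
    have := mul_nonneg hα0.le (hfnn x)
    linarith
  -- the key pointwise identity:
  -- Rbar = R(1 - α²(f² + n(n-1)/R·|∇f|²)) + nα(1+αf)·f·(R+2ρ)
  have hmain : ∀ x, Rbar x
      = scal x * (1 - α ^ 2 * ((f x) ^ 2 + ((n : ℝ) * ((n : ℝ) - 1) / scal x) * vnormSq (gradf x)))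
        + (n : ℝ) * α * (1 + α * f x) * (f x * (scal x + 2 * ρ x)) := by
    intro x
    have hu := hu x
    have hsc := (hscalpos x).ne'
    have ha : 0 < (1 + α * f x) ^ (((n:ℝ)+2)/2) := Real.rpow_pos_of_pos hu _
    have e1 : ((1 + α * f x) ^ (-(((n:ℝ)-2)/2))) ^ (-(((n:ℝ)+2)/((n:ℝ)-2)))
        = (1 + α * f x) ^ (((n:ℝ)+2)/2) := by
      rw [← Real.rpow_mul hu.le]
      congr 1
      field_simp
    have e2 : (1 + α * f x) ^ (-(((n:ℝ)-2)/2))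
        = (1 + α * f x) * (1 + α * f x) / (1 + α * f x) ^ (((n:ℝ)+2)/2) := by
      rw [eq_div_iff ha.ne', ← Real.rpow_add hu,
        show -(((n:ℝ)-2)/2) + ((n:ℝ)+2)/2 = 2 by ring,
        show (2:ℝ) = ((2:ℕ):ℝ) by norm_num, Real.rpow_natCast]
      ring
    have e3 : (1 + α * f x) ^ (-((n:ℝ)/2))
        = (1 + α * f x) / (1 + α * f x) ^ (((n:ℝ)+2)/2) := by
      rw [eq_div_iff ha.ne', ← Real.rpow_add hu,
        show -((n:ℝ)/2) + ((n:ℝ)+2)/2 = 1 by ring, Real.rpow_one]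
    have e4 : (1 + α * f x) ^ (-(((n:ℝ)+2)/2))
        = 1 / (1 + α * f x) ^ (((n:ℝ)+2)/2) := by
      rw [eq_div_iff ha.ne', ← Real.rpow_add hu,
        show -(((n:ℝ)+2)/2) + ((n:ℝ)+2)/2 = 0 by ring, Real.rpow_zero]
    rw [hRbar x, hlapv x, hfluid x, e1, e2, e3, e4]
    field_simp
    ring
  -- nonnegativity of the two terms
  have hQ0 : ∀ x, 0 ≤ (f x) ^ 2 + ((n : ℝ) * ((n : ℝ) - 1) / scal x) * vnormSq (gradf x) := by
    intro x
    have h1 : 0 ≤ (n : ℝ) * ((n : ℝ) - 1) / scal x :=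
      div_nonneg (by nlinarith) (hscalpos x).le
    have h2 := vnormSq_nonneg (gradf x)
    nlinarith [sq_nonneg (f x)]
  have hQle : ∀ x, α ^ 2 * ((f x) ^ 2 + ((n : ℝ) * ((n : ℝ) - 1) / scal x) * vnormSq (gradf x)) ≤ 1 := by
    intro x
    set Q := (f x) ^ 2 + ((n : ℝ) * ((n : ℝ) - 1) / scal x) * vnormSq (gradf x) with hQdef
    have h1 : Real.sqrt Q ≤ α⁻¹ := hα.2 ⟨x, rfl⟩
    have h2 : Real.sqrt Q ^ 2 = Q := Real.sq_sqrt (hQ0 x)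
    have h3 : 0 ≤ Real.sqrt Q := Real.sqrt_nonneg Q
    have h4 : α * α⁻¹ = 1 := mul_inv_cancel₀ hα0.ne'
    have h5 : α * Real.sqrt Q ≤ 1 := by
      have := mul_le_mul_of_nonneg_left h1 hα0.le
      linarith
    have h6 : 0 ≤ α * Real.sqrt Q := mul_nonneg hα0.le h3
    have h7 : α ^ 2 * Q = (α * Real.sqrt Q) ^ 2 := by rw [mul_pow, h2]
    nlinarith
  have hA : ∀ x, 0 ≤ scal x * (1 - α ^ 2 * ((f x) ^ 2 + ((n : ℝ) * ((n : ℝ) - 1) / scal x) * vnormSq (gradf x))) := by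
    intro x
    have h1 := hQle x
    have h2 := (hscalpos x).le
    nlinarith
  have hρ : ∀ x, 0 ≤ scal x + 2 * ρ x := by
    intro x
    have h1 := hdec x
    have h2 := neg_abs_le (ρ x)
    linarith
  have hB : ∀ x, 0 ≤ (n : ℝ) * α * (1 + α * f x) * (f x * (scal x + 2 * ρ x)) := by
    intro x
    exact mul_nonneg (mul_nonneg (mul_nonneg (by linarith) hα0.le) (hu x).le)
      (mul_nonneg (hfnn x) (hρ x))
  refine ⟨fun x => by rw [hmain x]; exact add_nonneg (hA x) (hB x), ?_, ?_⟩
  · -- forward direction of the characterization of Rbar ≡ 0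
    intro hR
    have hzero : ∀ x, scal x * (1 - α ^ 2 * ((f x) ^ 2 + ((n : ℝ) * ((n : ℝ) - 1) / scal x) * vnormSq (gradf x))) = 0
        ∧ f x * (scal x + 2 * ρ x) = 0 := by
      intro x
      have h := hR x
      rw [hmain x] at h
      have hAx := hA x
      have hBx := hB x
      have hB0 : (n : ℝ) * α * (1 + α * f x) * (f x * (scal x + 2 * ρ x)) = 0 := by linarith
      have hpos : 0 < (n : ℝ) * α * (1 + α * f x) :=
        mul_pos (mul_pos (by linarith) hα0) (hu x)
      exact ⟨by linarith, (mul_eq_zero.mp hB0).resolve_left hpos.ne'⟩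
    constructor
    · intro x
      have hB0 := (hzero x).2
      rw [hfluid x]
      field_simp
      linear_combination ((n:ℝ)) * hB0
    · refine ⟨α⁻¹ ^ 2, fun x => ?_⟩
      have hA0 := (hzero x).1
      have h1 : 1 - α ^ 2 * ((f x) ^ 2 + ((n : ℝ) * ((n : ℝ) - 1) / scal x) * vnormSq (gradf x)) = 0 :=
        (mul_eq_zero.mp hA0).resolve_left (hscalpos x).ne'
      have h4 : α * α⁻¹ = 1 := mul_inv_cancel₀ hα0.ne'
      have hα2 : (0:ℝ) < α ^ 2 := by positivity
      nlinarith
  · -- backward direction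
    rintro ⟨hlap, C, hC⟩
    have hB0 : ∀ x, f x * (scal x + 2 * ρ x) = 0 := by
      intro x
      have h1 := hfluid x
      rw [hlap x] at h1
      field_simp at h1
      have h2 : ((n:ℝ) * ((n:ℝ) - 1) ^ 2) * (f x * (scal x + 2 * ρ x)) = 0 := by
        linear_combination (-((n:ℝ) - 1) ^ 2) * h1
      exact (mul_eq_zero.mp h2).resolve_left (mul_ne_zero hn0 (pow_ne_zero 2 hN1))
    have hCval : C = α⁻¹ ^ 2 := by
      obtain ⟨x0, hx0⟩ := hα.1
      have hQx0 := hC x0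
      have hs : Real.sqrt C = α⁻¹ := by rw [← hQx0]; exact hx0
      have hC0 : 0 ≤ C := hQx0 ▸ hQ0 x0
      rw [← hs, Real.sq_sqrt hC0]
    intro x
    rw [hmain x]
    have h4 : α * α⁻¹ = 1 := mul_inv_cancel₀ hα0.ne'
    have h5 : α ^ 2 * α⁻¹ ^ 2 = 1 := by rw [← mul_pow, h4, one_pow]
    have h6 := hC x
    rw [hCval] at h6
    linear_combination (-(scal x) * α ^ 2) * h6 + (-(scal x)) * h5
      + ((n:ℝ) * α * (1 + α * f x)) * hB0 x
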